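/- Let c : ℕ × ℕ → ℝ satisfy: c(g,n) = 0 whenever n < 2g; c(0,0) = 1; and the Harer–Zagier recursion (n+1)·c(g,n) = 2(2n−1)·c(g,n−1) + (2n−1)(n−1)(2n−3)·c(g−1,n−2) for all g ≥ 0 and n ≥ 1, where any term with a negative argument is read as 0. Suppose that for each g the series L_g(w) := Σ_{k=0}^∞ c(g,k)·w^{−2k−1} converges for every real w > 2. Then each L_g is three times differentiable on (2,∞) and for every w > 2 and every g ≥ 0: L_g‴(w) = (w² − 4)·L_{g+1}′(w) − w·L_{g+1}(w). -/

import Mathlib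

open Filter Set

private lemma zpow_anti_base {b x : ℝ} (hb : 0 < b) (hbx : b ≤ x) {m : ℤ} (hm : m ≤ 0) :
    x ^ m ≤ b ^ m := by
  obtain ⟨n, rfl⟩ : ∃ n : ℕ, m = -n := ⟨(-m).toNat, by omega⟩
  rw [zpow_neg, zpow_neg, zpow_natCast, zpow_natCast]
  exact inv_anti₀ (pow_pos hb n) (pow_le_pow_left₀ hb.le hbx n)

private noncomputable def dd : ℕ → ℕ → ℝ
  | 0, _ => 1
  | j+1, k => dd j k * (-(2*(k:ℝ)) - 1 - j)

private def ee (j k : ℕ) : ℤ := -(2*(k:ℤ)) - 1 - j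

private lemma ee_succ (j k : ℕ) : ee (j+1) k = ee j k - 1 := by
  simp only [ee]; push_cast; ring

private lemma ee_cast (j k : ℕ) : ((ee j k : ℤ) : ℝ) = -(2*(k:ℝ)) - 1 - j := by
  simp only [ee]; push_cast; ring

private lemma ee_le (j k : ℕ) : ee j k ≤ -(2*(k:ℤ)) := by
  simp only [ee]; omega

private lemma dd_abs : ∀ j, j ≤ 3 → ∀ k, |dd j k| ≤ (2*(k:ℝ)+4)^j := by
  intro j
  induction j with
  | zero => intro _ k; simp [dd]
  | succ j ih =>
    intro hj k
    have h1 := ih (by omega) k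
    have hb : (0:ℝ) ≤ 2*(k:ℝ)+4 := by positivity
    calc |dd (j+1) k| = |dd j k| * |(-(2*(k:ℝ)) - 1 - j)| := by
          rw [dd, abs_mul]
      _ ≤ (2*(k:ℝ)+4)^j * (2*(k:ℝ)+4) := by
          apply mul_le_mul h1 ?_ (abs_nonneg _) (by positivity)
          rw [abs_le]
          constructor
          · have : (j:ℝ) ≤ 3 := by exact_mod_cast Nat.le_of_lt_succ (by omega)
            nlinarith [Nat.cast_nonneg (α := ℝ) k]
          · nlinarith [Nat.cast_nonneg (α := ℝ) k, Nat.cast_nonneg (α := ℝ) j]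
      _ = (2*(k:ℝ)+4)^(j+1) := by ring

private lemma master {a : ℕ → ℝ}
    (hS : ∀ r : ℝ, 2 < r → Summable (fun k : ℕ => a k * r ^ (-(2*(k:ℤ)) - 1)))
    {w : ℝ} (hw : 2 < w) :
    Summable (fun k : ℕ => |a k| * (2*(k:ℝ)+4)^3 * w ^ (-(2*(k:ℤ)))) := by
  obtain ⟨r, hr2, hrw⟩ : ∃ r : ℝ, 2 < r ∧ r < w := ⟨(2+w)/2, by linarith, by linarith⟩
  have hr0 : (0:ℝ) < r := by linarith
  have hw0 : (0:ℝ) < w := by linarith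
  have hs := (hS r hr2).abs
  obtain ⟨M, hM⟩ := (hs.tendsto_atTop_zero.bddAbove_range).imp
    (fun M hM => fun k => hM (Set.mem_range_self k))
  obtain ⟨q, hqdef⟩ : ∃ q : ℝ, q = (r/w)^2 := ⟨_, rfl⟩
  have hq0 : 0 ≤ q := by rw [hqdef]; positivity
  have hq1 : q < 1 := by
    rw [hqdef]
    have : r/w < 1 := (div_lt_one hw0).2 hrw
    nlinarith [div_pos hr0 hw0]
  have hgeo : Summable (fun k : ℕ => M * r * ((2*(k:ℝ)+4)^3 * q^k)) := by
    have h3 : Summable (fun k : ℕ => (k:ℝ)^3 * q^k) :=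
      summable_pow_mul_geometric_of_norm_lt_one 3 (by rwa [Real.norm_eq_abs, abs_of_nonneg hq0])
    have h2 : Summable (fun k : ℕ => (k:ℝ)^2 * q^k) :=
      summable_pow_mul_geometric_of_norm_lt_one 2 (by rwa [Real.norm_eq_abs, abs_of_nonneg hq0])
    have h1 : Summable (fun k : ℕ => (k:ℝ)^1 * q^k) :=
      summable_pow_mul_geometric_of_norm_lt_one 1 (by rwa [Real.norm_eq_abs, abs_of_nonneg hq0])
    have h0 : Summable (fun k : ℕ => q^k) := summable_geometric_of_lt_one hq0 hq1
    have : Summable (fun k : ℕ => 8*((k:ℝ)^3*q^k) + 48*((k:ℝ)^2*q^k) + 96*((k:ℝ)^1*q^k) + 64*q^k) :=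
      (((h3.mul_left 8).add (h2.mul_left 48)).add (h1.mul_left 96)).add (h0.mul_left 64)
    apply (this.mul_left (M*r)).congr
    intro k; ring
  apply Summable.of_nonneg_of_le (fun k => by positivity) ?_ hgeo
  intro k
  have hMk := hM k
  rw [abs_mul] at hMk
  have hrk : (0:ℝ) < r ^ (-(2*(k:ℤ)) - 1) := zpow_pos hr0 _
  have hak : |a k| ≤ M * r ^ (2*(k:ℤ) + 1) := by
    have h2 : |a k| ≤ M / |r ^ (-(2*(k:ℤ)) - 1)| := by
      rw [le_div_iff₀ (abs_pos.2 (ne_of_gt hrk))]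
      exact hMk
    rw [abs_of_pos hrk, div_eq_mul_inv, ← zpow_neg, neg_sub, sub_neg_eq_add] at h2
    have e : (1 + 2*(k:ℤ)) = 2*(k:ℤ) + 1 := by ring
    rwa [e] at h2
  have hwk : (0:ℝ) < w ^ (-(2*(k:ℤ))) := zpow_pos hw0 _
  calc |a k| * (2*(k:ℝ)+4)^3 * w ^ (-(2*(k:ℤ)))
      ≤ (M * r ^ (2*(k:ℤ) + 1)) * (2*(k:ℝ)+4)^3 * w ^ (-(2*(k:ℤ))) := by
        apply mul_le_mul_of_nonneg_right (mul_le_mul_of_nonneg_right hak (by positivity)) hwk.le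
    _ = M * r * ((2*(k:ℝ)+4)^3 * q^k) := by
        have e1 : r ^ (2*(k:ℤ) + 1) = r * (r^2)^k := by
          rw [show 2*(k:ℤ) + 1 = ((2*k+1 : ℕ) : ℤ) by push_cast; ring, zpow_natCast,
            pow_succ, pow_mul]
          ring
        have e2 : w ^ (-(2*(k:ℤ))) = ((w^2)⁻¹)^k := by
          rw [show -(2*(k:ℤ)) = -((2*k : ℕ) : ℤ) by push_cast; ring, zpow_neg, zpow_natCast,
            pow_mul, inv_pow]
        have e3 : q^k = (r^2)^k * ((w^2)⁻¹)^k := by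
          rw [hqdef, div_pow, div_eq_mul_inv, mul_pow]
        rw [e1, e2, e3]
        ring

private noncomputable def GG (a : ℕ → ℝ) (j : ℕ) (w : ℝ) : ℝ :=
  ∑' k : ℕ, a k * dd j k * w ^ (ee j k)

private lemma GG_term_bound {a : ℕ → ℝ} {j : ℕ} (hj : j ≤ 3) {w1 y : ℝ} (h1 : 2 < w1)
    (hy : w1 ≤ y) (k : ℕ) :
    ‖a k * dd j k * y ^ ee j k‖ ≤ |a k| * (2*(k:ℝ)+4)^3 * w1 ^ (-(2*(k:ℤ))) := by
  have hy0 : (0:ℝ) < y := by linarith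
  have hw10 : (0:ℝ) < w1 := by linarith
  rw [Real.norm_eq_abs, abs_mul, abs_mul, abs_of_pos (zpow_pos hy0 _)]
  have hdd : |dd j k| ≤ (2*(k:ℝ)+4)^3 := by
    calc |dd j k| ≤ (2*(k:ℝ)+4)^j := dd_abs j hj k
      _ ≤ (2*(k:ℝ)+4)^3 := pow_le_pow_right₀ (by nlinarith [Nat.cast_nonneg (α := ℝ) k]) hj
  have hzp : y ^ ee j k ≤ w1 ^ (-(2*(k:ℤ))) := by
    calc y ^ ee j k ≤ w1 ^ ee j k := zpow_anti_base hw10 hy (by have := ee_le j k; omega)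
      _ ≤ w1 ^ (-(2*(k:ℤ))) := zpow_le_zpow_right₀ (by linarith) (ee_le j k)
  have h1' : |a k| * |dd j k| ≤ |a k| * (2*(k:ℝ)+4)^3 :=
    mul_le_mul_of_nonneg_left hdd (abs_nonneg _)
  exact mul_le_mul h1' hzp (le_of_lt (zpow_pos hy0 _)) (by positivity)

private lemma GG_summable {a : ℕ → ℝ}
    (hS : ∀ r : ℝ, 2 < r → Summable (fun k : ℕ => a k * r ^ (-(2*(k:ℤ)) - 1)))
    {j : ℕ} (hj : j ≤ 3) {w : ℝ} (hw : 2 < w) :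
    Summable (fun k : ℕ => a k * dd j k * w ^ (ee j k)) :=
  Summable.of_norm_bounded (master hS hw) (GG_term_bound hj hw le_rfl)

private lemma GG_hasDerivAt {a : ℕ → ℝ}
    (hS : ∀ r : ℝ, 2 < r → Summable (fun k : ℕ => a k * r ^ (-(2*(k:ℤ)) - 1)))
    {j : ℕ} (hj : j ≤ 2) {w : ℝ} (hw : 2 < w) :
    HasDerivAt (GG a j) (GG a (j+1) w) w := by
  obtain ⟨w1, hw12, hw1w⟩ : ∃ w1 : ℝ, 2 < w1 ∧ w1 < w := ⟨(2+w)/2, by linarith, by linarith⟩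
  have hw10 : (0:ℝ) < w1 := by linarith
  show HasDerivAt (fun z => ∑' k : ℕ, a k * dd j k * z ^ (ee j k))
    (∑' k : ℕ, a k * dd (j+1) k * w ^ (ee (j+1) k)) w
  refine hasDerivAt_tsum_of_isPreconnected
    (u := fun k : ℕ => |a k| * (2*(k:ℝ)+4)^3 * w1 ^ (-(2*(k:ℤ))))
    (g := fun (k : ℕ) z => a k * dd j k * z ^ (ee j k))
    (g' := fun (k : ℕ) y => a k * dd (j+1) k * y ^ (ee (j+1) k))
    (master hS hw12) isOpen_Ioi (isPreconnected_Ioi (a := w1))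
    (fun k y hy => ?_) (fun k y hy => ?_) (mem_Ioi.2 hw1w)
    (GG_summable hS (by omega) hw) (mem_Ioi.2 hw1w)
  · -- HasDerivAt of each term
    have hy0 : y ≠ 0 := (lt_trans hw10 (mem_Ioi.1 hy)).ne'
    have h := (hasDerivAt_zpow (ee j k) y (Or.inl hy0)).const_mul (a k * dd j k)
    refine h.congr_deriv ?_
    symm
    show a k * dd (j+1) k * y ^ (ee (j+1) k) = _
    rw [ee_succ]
    have : dd (j+1) k = dd j k * ((ee j k : ℤ) : ℝ) := by rw [dd, ee_cast]
    rw [this]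
    ring
  · exact GG_term_bound (by omega) hw12 (le_of_lt (mem_Ioi.1 hy)) k

private lemma identity_lemma (c : ℕ → ℕ → ℝ)
    (hvanish : ∀ g n : ℕ, n < 2 * g → c g n = 0)
    (hHZ : ∀ g n : ℕ, 1 ≤ n →
      ((n : ℝ) + 1) * c g n =
        2 * (2 * (n : ℝ) - 1) * c g (n - 1) +
          (2 * (n : ℝ) - 1) * ((n : ℝ) - 1) * (2 * (n : ℝ) - 3) *
            (if 2 ≤ n ∧ 1 ≤ g then c (g - 1) (n - 2) else 0))
    (hconv : ∀ g : ℕ, ∀ w : ℝ, 2 < w →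
      Summable (fun k : ℕ => c g k * w ^ (-(2 * (k : ℤ)) - 1)))
    (g : ℕ) {w : ℝ} (hw : 2 < w) :
    GG (c g) 3 w = (w^2 - 4) * GG (c (g+1)) 1 w - w * GG (c (g+1)) 0 w := by
  have hw0' : (0:ℝ) < w := by linarith
  have hw0 : w ≠ 0 := ne_of_gt hw0'
  have hw1 : (1:ℝ) ≤ w := by linarith
  set F : ℕ → ℝ := fun k => (-(2*(k:ℝ)) - 2) * c (g+1) k * w ^ (-(2*(k:ℤ))) with hF
  set H : ℕ → ℝ := fun k => (8*(k:ℝ) + 4) * c (g+1) k * w ^ (-(2*(k:ℤ)) - 2) with hH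
  have knonneg : ∀ k : ℕ, (0:ℝ) ≤ (k:ℝ) := fun k => Nat.cast_nonneg k
  have SF : Summable F := by
    apply Summable.of_norm_bounded (master (hconv (g+1)) hw)
    intro k
    have h1 : ‖F k‖ = |c (g+1) k| * |(-(2*(k:ℝ)) - 2)| * w ^ (-(2*(k:ℤ))) := by
      rw [hF, Real.norm_eq_abs, abs_mul, abs_mul, abs_of_pos (zpow_pos hw0' _)]
      ring
    rw [h1]
    gcongr
    rw [abs_le]
    have hk := knonneg k
    have hk2 : (0:ℝ) ≤ (k:ℝ)*(k:ℝ) := mul_nonneg hk hk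
    have hk3 : (0:ℝ) ≤ (k:ℝ)*(k:ℝ)*(k:ℝ) := mul_nonneg hk2 hk
    constructor
    · nlinarith
    · nlinarith
  have SH : Summable H := by
    apply Summable.of_norm_bounded (master (hconv (g+1)) hw)
    intro k
    have h1 : ‖H k‖ = |c (g+1) k| * |8*(k:ℝ) + 4| * w ^ (-(2*(k:ℤ)) - 2) := by
      rw [hH, Real.norm_eq_abs, abs_mul, abs_mul, abs_of_pos (zpow_pos hw0' _)]
      ring
    rw [h1]
    have h2 : |8*(k:ℝ) + 4| ≤ (2*(k:ℝ)+4)^3 := by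
      rw [abs_of_nonneg (by nlinarith [knonneg k])]
      have hk := knonneg k
      have hk2 : (0:ℝ) ≤ (k:ℝ)*(k:ℝ) := mul_nonneg hk hk
      have hk3 : (0:ℝ) ≤ (k:ℝ)*(k:ℝ)*(k:ℝ) := mul_nonneg hk2 hk
      nlinarith
    have h3 : w ^ (-(2*(k:ℤ)) - 2) ≤ w ^ (-(2*(k:ℤ))) :=
      zpow_le_zpow_right₀ hw1 (by omega)
    calc |c (g+1) k| * |8*(k:ℝ) + 4| * w ^ (-(2*(k:ℤ)) - 2)
        ≤ |c (g+1) k| * (2*(k:ℝ)+4)^3 * w ^ (-(2*(k:ℤ)) - 2) := by gcongr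
      _ ≤ |c (g+1) k| * (2*(k:ℝ)+4)^3 * w ^ (-(2*(k:ℤ))) := by
          apply mul_le_mul_of_nonneg_left h3 (by positivity)
  have hc0 : c (g+1) 0 = 0 := hvanish (g+1) 0 (by omega)
  have hc1 : c (g+1) 1 = 0 := hvanish (g+1) 1 (by omega)
  have hF0 : F 0 = 0 := by simp [hF, hc0]
  have hF1 : F 1 = 0 := by simp [hF, hc1]
  have hH0 : H 0 = 0 := by simp [hH, hc0]
  have key : ∀ k : ℕ, c g k * dd 3 k * w ^ ee 3 k = F (k+2) + H (k+1) := by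
    intro k
    have h0 := hHZ (g+1) (k+2) (by omega)
    rw [if_pos ⟨by omega, by omega⟩] at h0
    have e1 : k+2-1 = k+1 := by omega
    have e2 : k+2-2 = k := by omega
    rw [e1, e2] at h0
    push_cast at h0
    simp only [hF, hH, dd, ee]
    push_cast
    rw [show -(2*(k:ℤ)) - 1 - 3 = -(2*(k:ℤ)) - 4 by ring,
      show -(2*((k:ℤ)+2)) = -(2*(k:ℤ)) - 4 by ring,
      show -(2*((k:ℤ)+1)) - 2 = -(2*(k:ℤ)) - 4 by ring]
    linear_combination (2 * w ^ (-(2*(k:ℤ)) - 4)) * h0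
  have SF2 : Summable (fun k : ℕ => F (k+2)) := (summable_nat_add_iff 2).2 SF
  have SH1 : Summable (fun k : ℕ => H (k+1)) := (summable_nat_add_iff 1).2 SH
  have eF := Summable.sum_add_tsum_nat_add 2 SF
  have eH := Summable.sum_add_tsum_nat_add 1 SH
  rw [Finset.sum_range_succ, Finset.sum_range_one, hF0, hF1, zero_add, zero_add] at eF
  rw [Finset.sum_range_one, hH0, zero_add] at eH
  have termwise : ∀ k : ℕ,
      (w^2 - 4) * (c (g+1) k * dd 1 k * w ^ ee 1 k) - w * (c (g+1) k * dd 0 k * w ^ ee 0 k)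
        = F k + H k := by
    intro k
    simp only [hF, hH]
    rw [show ee 1 k = -(2*(k:ℤ)) - 2 by simp only [ee]; push_cast; ring,
      show ee 0 k = -(2*(k:ℤ)) - 1 by simp only [ee]; push_cast; ring,
      show dd 1 k = -(2*(k:ℝ)) - 1 by norm_num [dd], show dd 0 k = (1:ℝ) by norm_num [dd]]
    have A2 : w ^ (-(2*(k:ℤ))) = w^2 * w ^ (-(2*(k:ℤ)) - 2) := by
      have h := zpow_add₀ hw0 (2:ℤ) (-(2*(k:ℤ)) - 2)
      rw [show (2:ℤ) + (-(2*(k:ℤ)) - 2) = -(2*(k:ℤ)) by ring] at h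
      rw [h, zpow_two]
      ring
    have A1 : w ^ (-(2*(k:ℤ)) - 1) = w * w ^ (-(2*(k:ℤ)) - 2) := by
      have h := zpow_add₀ hw0 (1:ℤ) (-(2*(k:ℤ)) - 2)
      rw [show (1:ℤ) + (-(2*(k:ℤ)) - 2) = -(2*(k:ℤ)) - 1 by ring] at h
      rw [h, zpow_one]
    rw [A2, A1]
    ring
  have S1 : Summable (fun k : ℕ => c (g+1) k * dd 1 k * w ^ ee 1 k) :=
    GG_summable (hconv (g+1)) (by omega) hw
  have S0 : Summable (fun k : ℕ => c (g+1) k * dd 0 k * w ^ ee 0 k) :=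
    GG_summable (hconv (g+1)) (by omega) hw
  calc GG (c g) 3 w = ∑' k : ℕ, (F (k+2) + H (k+1)) := tsum_congr key
    _ = (∑' k : ℕ, F (k+2)) + ∑' k : ℕ, H (k+1) := Summable.tsum_add SF2 SH1
    _ = (∑' k : ℕ, F k) + ∑' k : ℕ, H k := by rw [eF, eH]
    _ = ∑' k : ℕ, (F k + H k) := (Summable.tsum_add SF SH).symm
    _ = ∑' k : ℕ, ((w^2 - 4) * (c (g+1) k * dd 1 k * w ^ ee 1 k)
          - w * (c (g+1) k * dd 0 k * w ^ ee 0 k)) := (tsum_congr termwise).symm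
    _ = (∑' k : ℕ, (w^2 - 4) * (c (g+1) k * dd 1 k * w ^ ee 1 k))
          - ∑' k : ℕ, w * (c (g+1) k * dd 0 k * w ^ ee 0 k) :=
        Summable.tsum_sub (S1.mul_left _) (S0.mul_left _)
    _ = (w^2 - 4) * GG (c (g+1)) 1 w - w * GG (c (g+1)) 0 w := by
        rw [GG, GG, tsum_mul_left, tsum_mul_left]

theorem stmt1
    (c : ℕ → ℕ → ℝ)
    (hvanish : ∀ g n : ℕ, n < 2 * g → c g n = 0)
    (hinit : c 0 0 = 1)
    (hHZ : ∀ g n : ℕ, 1 ≤ n →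
      ((n : ℝ) + 1) * c g n =
        2 * (2 * (n : ℝ) - 1) * c g (n - 1) +
          (2 * (n : ℝ) - 1) * ((n : ℝ) - 1) * (2 * (n : ℝ) - 3) *
            (if 2 ≤ n ∧ 1 ≤ g then c (g - 1) (n - 2) else 0))
    (L : ℕ → ℝ → ℝ)
    (hL : ∀ g : ℕ, ∀ w : ℝ, L g w = ∑' k : ℕ, c g k * w ^ (-(2 * (k : ℤ)) - 1))
    (hconv : ∀ g : ℕ, ∀ w : ℝ, 2 < w →
      Summable (fun k : ℕ => c g k * w ^ (-(2 * (k : ℤ)) - 1))) :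
    ∀ g : ℕ, ∀ w : ℝ, 2 < w →
      DifferentiableAt ℝ (L g) w ∧
      DifferentiableAt ℝ (deriv (L g)) w ∧
      DifferentiableAt ℝ (deriv (deriv (L g))) w ∧
      deriv (deriv (deriv (L g))) w =
        (w ^ 2 - 4) * deriv (L (g + 1)) w - w * L (g + 1) w := by

  have hLG : ∀ g' : ℕ, L g' = GG (c g') 0 := by
    intro g'
    funext x
    rw [hL g' x, GG]
    exact tsum_congr fun k => by norm_num [dd, ee]
  have hd0 : ∀ (g' : ℕ) (x : ℝ), 2 < x → HasDerivAt (L g') (GG (c g') 1 x) x := by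
    intro g' x hx
    rw [hLG g']
    exact GG_hasDerivAt (hconv g') (by omega) hx
  have hEq1 : ∀ (g' : ℕ) (x : ℝ), 2 < x → deriv (L g') x = GG (c g') 1 x :=
    fun g' x hx => (hd0 g' x hx).deriv
  have hd1 : ∀ (g' : ℕ) (x : ℝ), 2 < x → HasDerivAt (deriv (L g')) (GG (c g') 2 x) x := by
    intro g' x hx
    refine (GG_hasDerivAt (hconv g') (by omega) hx).congr_of_eventuallyEq ?_
    exact Filter.eventuallyEq_of_mem (Ioi_mem_nhds hx) (fun y hy => hEq1 g' y (mem_Ioi.1 hy))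
  have hEq2 : ∀ (g' : ℕ) (x : ℝ), 2 < x → deriv (deriv (L g')) x = GG (c g') 2 x :=
    fun g' x hx => (hd1 g' x hx).deriv
  have hd2 : ∀ (g' : ℕ) (x : ℝ), 2 < x → HasDerivAt (deriv (deriv (L g'))) (GG (c g') 3 x) x := by
    intro g' x hx
    refine (GG_hasDerivAt (hconv g') (by omega) hx).congr_of_eventuallyEq ?_
    exact Filter.eventuallyEq_of_mem (Ioi_mem_nhds hx) (fun y hy => hEq2 g' y (mem_Ioi.1 hy))
  intro g w hw
  refine ⟨(hd0 g w hw).differentiableAt, (hd1 g w hw).differentiableAt,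
    (hd2 g w hw).differentiableAt, ?_⟩
  rw [(hd2 g w hw).deriv, hEq1 (g+1) w hw, hLG (g+1)]
  exact identity_lemma c hvanish hHZ hconv g hw
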